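/- The assignment π₄(u) = diag(ω, ω³, ω⁵, ω⁷), π₄(s) = the permutation matrix swapping basis vectors 1↔2 and 3↔4, π₄(t) = the permutation matrix swapping 1↔3 and 2↔4 (ω = e^{2πi/8}) extends to a 4-dimensional irreducible unitary representation of G = Z₈ ⋊ Aut(Z₈). -/
import Mathlib


/-- Relations of the presentation
`⟨s, t, u | s² = t² = u⁸ = 1, st = ts, sus⁻¹ = u³, tut⁻¹ = u⁵⟩`,
with generators `0 ↦ s`, `1 ↦ t`, `2 ↦ u`. -/
def holRels : Set (FreeGroup (Fin 3)) :=
  { FreeGroup.of 0 ^ 2, FreeGroup.of 1 ^ 2, FreeGroup.of 2 ^ 8,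
    FreeGroup.of 0 * FreeGroup.of 1 * (FreeGroup.of 0)⁻¹ * (FreeGroup.of 1)⁻¹,
    FreeGroup.of 0 * FreeGroup.of 2 * (FreeGroup.of 0)⁻¹ * (FreeGroup.of 2 ^ 3)⁻¹,
    FreeGroup.of 1 * FreeGroup.of 2 * (FreeGroup.of 1)⁻¹ * (FreeGroup.of 2 ^ 5)⁻¹ }

/-- The group `G = Z₈ ⋊ Aut(Z₈)`, presented by the above relations. -/
def Hol8 : Type := PresentedGroup holRels

noncomputable instance : Group Hol8 := by unfold Hol8; infer_instance

/-- The images of the generators `s`, `t`, `u` in `G`. -/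
noncomputable def gs : Hol8 := PresentedGroup.of 0
noncomputable def gt : Hol8 := PresentedGroup.of 1
noncomputable def gu : Hol8 := PresentedGroup.of 2

noncomputable def ω8 : ℂ := Complex.exp (2 * Real.pi * Complex.I / 8)


section Pi4Aux

private lemma hω8 : ω8 ^ 8 = 1 := by
  rw [ω8, ← Complex.exp_nat_mul,
    show (8:ℕ) * (2 * Real.pi * Complex.I / 8) = 2 * Real.pi * Complex.I by push_cast; ring,
    Complex.exp_two_pi_mul_I]

private lemma hω4 : ω8 ^ 4 = -1 := by
  rw [ω8, ← Complex.exp_nat_mul,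
    show (4:ℕ) * (2 * Real.pi * Complex.I / 8) = Real.pi * Complex.I by push_cast; ring,
    Complex.exp_pi_mul_I]

private lemma hω0 : ω8 ≠ 0 := Complex.exp_ne_zero _

private lemma hconj : (starRingEnd ℂ) ω8 * ω8 = 1 := by
  rw [ω8, ← Complex.exp_conj, ← Complex.exp_add]
  rw [show (starRingEnd ℂ) (2 * Real.pi * Complex.I / 8) + 2 * Real.pi * Complex.I / 8 = 0 by
    simp [map_div₀, Complex.conj_I, Complex.conj_ofReal, map_ofNat]; ring]
  exact Complex.exp_zero

private lemma h2ne : ω8 ^ 2 ≠ 1 := by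
  intro h
  have h4 : ω8 ^ 4 = 1 := by rw [show (4:ℕ) = 2 * 2 from rfl, pow_mul, h, one_pow]
  rw [hω4] at h4; norm_num at h4

private lemma h4ne : ω8 ^ 4 ≠ 1 := by rw [hω4]; norm_num

private lemma h6ne : ω8 ^ 6 ≠ 1 := by
  intro h
  have h12 : ω8 ^ 12 = 1 := by rw [show (12:ℕ) = 6 * 2 from rfl, pow_mul, h, one_pow]
  have h12' : ω8 ^ 12 = -1 := by
    rw [show (12:ℕ) = 8 + 4 from rfl, pow_add, hω8, one_mul, hω4]
  rw [h12] at h12'; norm_num at h12'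

private lemma keyne (a k : ℕ) (hk : ω8 ^ k ≠ 1) : ω8 ^ a ≠ ω8 ^ (a + k) := by
  intro h
  exact hk (mul_left_cancel₀ (pow_ne_zero a hω0)
    (by rw [mul_one, ← pow_add]; exact h)).symm

noncomputable def dv : Fin 4 → ℂ := ![ω8, ω8 ^ 3, ω8 ^ 5, ω8 ^ 7]
noncomputable def Um : Matrix (Fin 4) (Fin 4) ℂ := Matrix.diagonal dv
def Sm : Matrix (Fin 4) (Fin 4) ℂ := !![0,1,0,0;1,0,0,0;0,0,0,1;0,0,1,0]
def Tm : Matrix (Fin 4) (Fin 4) ℂ := !![0,0,1,0;0,0,0,1;1,0,0,0;0,1,0,0]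

private lemma Sm_mem : Sm ∈ Matrix.unitaryGroup (Fin 4) ℂ := by
  rw [Matrix.mem_unitaryGroup_iff]
  ext i j
  fin_cases i <;> fin_cases j <;>
    simp [Sm, Matrix.mul_apply, Fin.sum_univ_four, Matrix.one_apply, Matrix.conjTranspose_apply]

private lemma Tm_mem : Tm ∈ Matrix.unitaryGroup (Fin 4) ℂ := by
  rw [Matrix.mem_unitaryGroup_iff]
  ext i j
  fin_cases i <;> fin_cases j <;>
    simp [Tm, Matrix.mul_apply, Fin.sum_univ_four, Matrix.one_apply, Matrix.conjTranspose_apply]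

private lemma Um_mem : Um ∈ Matrix.unitaryGroup (Fin 4) ℂ := by
  rw [Matrix.mem_unitaryGroup_iff]
  ext i j
  fin_cases i <;> fin_cases j <;>
    simp [Um, dv, Matrix.mul_apply, Fin.sum_univ_four, Matrix.one_apply,
      Matrix.conjTranspose_apply, Matrix.diagonal_apply, ← mul_pow,
      show ω8 * (starRingEnd ℂ) ω8 = 1 from mul_comm ω8 _ ▸ hconj]

set_option linter.unreachableTactic false in
set_option linter.unusedTactic false in
private lemma hSU : Sm * Um = Um ^ 3 * Sm := by
  ext i j
  fin_cases i <;> fin_cases j <;>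
    simp [Sm, Um, dv, Matrix.mul_apply, Fin.sum_univ_four, Matrix.diagonal_apply,
      Matrix.diagonal_pow, Matrix.vecHead, Matrix.vecTail] <;>
    first
      | linear_combination ω8 * hω8
      | linear_combination ω8^7 * hω8
      | linear_combination (ω8^13 + ω8^5) * hω8
      | linear_combination (ω8^17 + ω8^9 + ω8) * hω8
      | linear_combination (ω8^27 + ω8^19 + ω8^11 + ω8^3) * hω8
      | linear_combination -(ω8 * hω8)
      | linear_combination -(ω8^7 * hω8)
      | linear_combination -((ω8^13 + ω8^5) * hω8)
      | linear_combination -((ω8^17 + ω8^9 + ω8) * hω8)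
      | linear_combination -((ω8^27 + ω8^19 + ω8^11 + ω8^3) * hω8)

set_option linter.unreachableTactic false in
set_option linter.unusedTactic false in
private lemma hTU : Tm * Um = Um ^ 5 * Tm := by
  ext i j
  fin_cases i <;> fin_cases j <;>
    simp [Tm, Um, dv, Matrix.mul_apply, Fin.sum_univ_four, Matrix.diagonal_apply,
      Matrix.diagonal_pow, Matrix.vecHead, Matrix.vecTail] <;>
    first
      | linear_combination ω8 * hω8
      | linear_combination ω8^7 * hω8
      | linear_combination (ω8^13 + ω8^5) * hω8
      | linear_combination (ω8^17 + ω8^9 + ω8) * hω8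
      | linear_combination (ω8^27 + ω8^19 + ω8^11 + ω8^3) * hω8
      | linear_combination -(ω8 * hω8)
      | linear_combination -(ω8^7 * hω8)
      | linear_combination -((ω8^13 + ω8^5) * hω8)
      | linear_combination -((ω8^17 + ω8^9 + ω8) * hω8)
      | linear_combination -((ω8^27 + ω8^19 + ω8^11 + ω8^3) * hω8)

set_option linter.unreachableTactic false in
set_option linter.unusedTactic false in
private lemma hU8 : Um ^ 8 = 1 := by
  ext i j
  fin_cases i <;> fin_cases j <;>
    simp [Um, dv, Matrix.diagonal_pow, Matrix.diagonal_apply, Matrix.one_apply,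
      Matrix.vecHead, Matrix.vecTail] <;>
    first
      | exact hω8
      | linear_combination (ω8^16 + ω8^8 + 1) * hω8
      | linear_combination (ω8^32 + ω8^24 + ω8^16 + ω8^8 + 1) * hω8
      | linear_combination (ω8^48 + ω8^40 + ω8^32 + ω8^24 + ω8^16 + ω8^8 + 1) * hω8

private lemma hSS : Sm * Sm = 1 := by
  ext i j
  fin_cases i <;> fin_cases j <;>
    simp [Sm, Matrix.mul_apply, Fin.sum_univ_four, Matrix.one_apply,
      Matrix.vecHead, Matrix.vecTail]

private lemma hTT : Tm * Tm = 1 := by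
  ext i j
  fin_cases i <;> fin_cases j <;>
    simp [Tm, Matrix.mul_apply, Fin.sum_univ_four, Matrix.one_apply,
      Matrix.vecHead, Matrix.vecTail]

private lemma hST : Sm * Tm = Tm * Sm := by
  ext i j
  fin_cases i <;> fin_cases j <;>
    simp [Sm, Tm, Matrix.mul_apply, Fin.sum_univ_four, Matrix.vecHead, Matrix.vecTail]

noncomputable def fgen : Fin 3 → Matrix.unitaryGroup (Fin 4) ℂ :=
  ![⟨Sm, Sm_mem⟩, ⟨Tm, Tm_mem⟩, ⟨Um, Um_mem⟩]

private lemma relsOne : ∀ r ∈ holRels, FreeGroup.lift fgen r = 1 := by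
  intro r hr
  simp only [holRels, Set.mem_insert_iff, Set.mem_singleton_iff] at hr
  rcases hr with rfl | rfl | rfl | rfl | rfl | rfl <;>
    simp only [map_mul, map_pow, map_inv, FreeGroup.lift_apply_of, fgen,
      Matrix.cons_val_zero, Matrix.cons_val_one, Matrix.head_cons, Matrix.cons_val_two,
      Matrix.tail_cons]
  · exact Subtype.ext (by simpa [sq] using hSS)
  · exact Subtype.ext (by simpa [sq] using hTT)
  · exact Subtype.ext (by simpa using hU8)
  · rw [mul_inv_eq_one, mul_inv_eq_iff_eq_mul]
    exact Subtype.ext (by simpa using hST)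
  · rw [mul_inv_eq_one, mul_inv_eq_iff_eq_mul]
    exact Subtype.ext (by simpa using hSU)
  · rw [mul_inv_eq_one, mul_inv_eq_iff_eq_mul]
    exact Subtype.ext (by simpa using hTU)

end Pi4Aux

/-- The assignment `π₄(u) = diag(ω, ω³, ω⁵, ω⁷)`, `π₄(s) =` the permutation
matrix swapping `1↔2`, `3↔4`, `π₄(t) =` the permutation matrix swapping `1↔3`,
`2↔4` (`ω = e^{2πi/8}`) extends to a 4-dimensional irreducible unitary
representation of `G = Z₈ ⋊ Aut(Z₈)`. -/
theorem pi4_exists_irreducible :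
    ∃ π : Hol8 →* Matrix.unitaryGroup (Fin 4) ℂ,
      (π gu : Matrix (Fin 4) (Fin 4) ℂ) = Matrix.diagonal ![ω8, ω8 ^ 3, ω8 ^ 5, ω8 ^ 7] ∧
      (π gs : Matrix (Fin 4) (Fin 4) ℂ) =
        !![0, 1, 0, 0; 1, 0, 0, 0; 0, 0, 0, 1; 0, 0, 1, 0] ∧
      (π gt : Matrix (Fin 4) (Fin 4) ℂ) =
        !![0, 0, 1, 0; 0, 0, 0, 1; 1, 0, 0, 0; 0, 1, 0, 0] ∧
      (∀ A : Matrix (Fin 4) (Fin 4) ℂ,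
        (∀ g : Hol8, A * (π g : Matrix (Fin 4) (Fin 4) ℂ) =
          (π g : Matrix (Fin 4) (Fin 4) ℂ) * A) → ∃ c : ℂ, A = c • 1) := by
  refine ⟨PresentedGroup.toGroup relsOne, ?_, ?_, ?_, ?_⟩
  · show ((PresentedGroup.toGroup relsOne (PresentedGroup.of 2) : Matrix.unitaryGroup (Fin 4) ℂ) :
      Matrix (Fin 4) (Fin 4) ℂ) = _
    rw [PresentedGroup.toGroup.of]
    rfl
  · show ((PresentedGroup.toGroup relsOne (PresentedGroup.of 0) : Matrix.unitaryGroup (Fin 4) ℂ) :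
      Matrix (Fin 4) (Fin 4) ℂ) = _
    rw [PresentedGroup.toGroup.of]
    rfl
  · show ((PresentedGroup.toGroup relsOne (PresentedGroup.of 1) : Matrix.unitaryGroup (Fin 4) ℂ) :
      Matrix (Fin 4) (Fin 4) ℂ) = _
    rw [PresentedGroup.toGroup.of]
    rfl
  · intro A hA
    have hgu : ((PresentedGroup.toGroup relsOne (gu : PresentedGroup holRels) :
        Matrix.unitaryGroup (Fin 4) ℂ) : Matrix (Fin 4) (Fin 4) ℂ) = Um := by
      rw [show (gu : PresentedGroup holRels) = PresentedGroup.of 2 from rfl,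
        PresentedGroup.toGroup.of]; rfl
    have hgs : ((PresentedGroup.toGroup relsOne (gs : PresentedGroup holRels) :
        Matrix.unitaryGroup (Fin 4) ℂ) : Matrix (Fin 4) (Fin 4) ℂ) = Sm := by
      rw [show (gs : PresentedGroup holRels) = PresentedGroup.of 0 from rfl,
        PresentedGroup.toGroup.of]; rfl
    have hgt : ((PresentedGroup.toGroup relsOne (gt : PresentedGroup holRels) :
        Matrix.unitaryGroup (Fin 4) ℂ) : Matrix (Fin 4) (Fin 4) ℂ) = Tm := by
      rw [show (gt : PresentedGroup holRels) = PresentedGroup.of 1 from rfl,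
        PresentedGroup.toGroup.of]; rfl
    have hU' : A * Um = Um * A := by rw [← hgu]; exact hA gu
    have hS' : A * Sm = Sm * A := by rw [← hgs]; exact hA gs
    have hT' : A * Tm = Tm * A := by rw [← hgt]; exact hA gt
    have hz : ∀ i j : Fin 4, dv i ≠ dv j → A i j = 0 := by
      intro i j hne
      have h := congr_fun (congr_fun hU' i) j
      rw [Um, Matrix.mul_diagonal, Matrix.diagonal_mul] at h
      rcases mul_eq_zero.1 (show A i j * (dv j - dv i) = 0 by linear_combination h) with h' | h'
      · exact h'
      · exact absurd (sub_eq_zero.mp h').symm hne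
    have n01 : dv 0 ≠ dv 1 := by simpa [dv] using keyne 1 2 h2ne
    have n02 : dv 0 ≠ dv 2 := by simpa [dv] using keyne 1 4 h4ne
    have n03 : dv 0 ≠ dv 3 := by simpa [dv] using keyne 1 6 h6ne
    have n12 : dv 1 ≠ dv 2 := by simpa [dv] using keyne 3 2 h2ne
    have n13 : dv 1 ≠ dv 3 := by simpa [dv] using keyne 3 4 h4ne
    have n23 : dv 2 ≠ dv 3 := by simpa [dv] using keyne 5 2 h2ne
    have z01 := hz 0 1 n01
    have z02 := hz 0 2 n02
    have z03 := hz 0 3 n03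
    have z10 := hz 1 0 n01.symm
    have z12 := hz 1 2 n12
    have z13 := hz 1 3 n13
    have z20 := hz 2 0 n02.symm
    have z21 := hz 2 1 n12.symm
    have z23 := hz 2 3 n23
    have z30 := hz 3 0 n03.symm
    have z31 := hz 3 1 n13.symm
    have z32 := hz 3 2 n23.symm
    have q11 : A 1 1 = A 0 0 := by
      have h := congr_fun (congr_fun hS' 0) 1
      simpa [Sm, Matrix.mul_apply, Fin.sum_univ_four, Matrix.vecHead, Matrix.vecTail] using h.symm
    have q22 : A 2 2 = A 0 0 := by
      have h := congr_fun (congr_fun hT' 0) 2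
      simpa [Tm, Matrix.mul_apply, Fin.sum_univ_four, Matrix.vecHead, Matrix.vecTail] using h.symm
    have q33 : A 3 3 = A 2 2 := by
      have h := congr_fun (congr_fun hS' 2) 3
      simpa [Sm, Matrix.mul_apply, Fin.sum_univ_four, Matrix.vecHead, Matrix.vecTail] using h.symm
    refine ⟨A 0 0, ?_⟩
    ext i j
    fin_cases i <;> fin_cases j <;>
      simp [Matrix.smul_apply, Matrix.one_apply, z01, z02, z03, z10, z12, z13, z20, z21, z23,
        z30, z31, z32, q11, q22, q33]
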